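/- Let T ⊆ K be an inclusion of commutative rings, I ⊆ T an ideal, G a monoid, and ρ : G → M₂(K) a monoid homomorphism (multiplicative, sending 1 to the identity matrix). Let χ, ψ : G → T be monoid homomorphisms into the multiplicative monoid of T, and assume that for every g ∈ G, tr ρ(g) lies in T and tr ρ(g) − (χ(g) + ψ(g)) ∈ I. Fix g₁, …, g_r ∈ G and set ρ_i = ρ(g_i) − ψ(g_i)·1 ∈ M₂(K). Let T⟨X₁, …, X_r⟩ be the free (noncommutative) T-algebra on r generators, and let V : T⟨X₁, …, X_r⟩ → T be the T-algebra homomorphism with V(X_i) = χ(g_i) − ψ(g_i). Then for every f ∈ T⟨X₁, …, X_r⟩ whose constant term is 0 (i.e. f lies in the two-sided ideal generated by X₁, …, X_r), the trace of f evaluated at (ρ₁, …, ρ_r) (via the T-algebra map T⟨X₁, …, X_r⟩ → M₂(K) sending X_i to ρ_i) lies in T, and tr(f(ρ₁, …, ρ_r)) − V(f) ∈ I. -/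

import Mathlib

section Aux

variable {T : Type*} [CommRing T] {K : Type*} [CommRing K] [Algebra T K]

/-- Evaluation of the monomial corresponding to a word under a `FreeAlgebra` lift,
pulled back through the monoid-algebra equivalence. -/
theorem stmt5_monomial_eval {X : Type*} {A : Type*} [Ring A] [Algebra T A]
    (w : FreeMonoid X) (c : T) (φ : X → A) :
    (FreeAlgebra.lift T φ) ((FreeAlgebra.equivMonoidAlgebraFreeMonoid (R := T) (X := X)).symm
      (MonoidAlgebra.single w c)) = c • (w.toList.map φ).prod := by
  have h1 : (FreeAlgebra.equivMonoidAlgebraFreeMonoid (R := T) (X := X)).symm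
      (MonoidAlgebra.single w c)
      = c • FreeMonoid.lift (FreeAlgebra.ι T) w := by
    show ((MonoidAlgebra.lift T (FreeAlgebra T X) (FreeMonoid X))
      (FreeMonoid.lift (FreeAlgebra.ι T))) (MonoidAlgebra.single w c) = _
    rw [MonoidAlgebra.lift_single]
  rw [h1, map_smul, FreeMonoid.lift_apply, map_list_prod, List.map_map]
  congr 1
  simp [FreeAlgebra.lift_ι_apply, Function.comp]

end Aux

/-- the trace identity lemma (Lemma `l:tr-char`).  For any noncommutative
polynomial `f` with zero constant term (i.e. killed by the augmentation sending every
generator to `0`), the trace of `f(ρ₁, …, ρ_r)`, where `ρ_i = ρ(g_i) − ψ(g_i)·1`, lies in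
`T` and is congruent modulo `I` to `V(f)`, where `V` sends `X_i ↦ χ(g_i) − ψ(g_i)`. -/
theorem stmt5 {T : Type*} [CommRing T] {K : Type*} [CommRing K] [Algebra T K]
    (hinj : Function.Injective (algebraMap T K))
    (I : Ideal T)
    {G : Type*} [Monoid G]
    (ρ : G →* Matrix (Fin 2) (Fin 2) K)
    (χ ψ : G →* T)
    (htr : ∀ g : G, ∃ t : T,
        algebraMap T K t = Matrix.trace (ρ g) ∧ t - (χ g + ψ g) ∈ I)
    (r : ℕ) (g : Fin r → G)
    (f : FreeAlgebra T (Fin r))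
    (hf : (FreeAlgebra.lift T (fun _ : Fin r => (0 : T))) f = 0) :
    ∃ t : T,
      algebraMap T K t
        = Matrix.trace ((FreeAlgebra.lift T (fun i : Fin r =>
            ρ (g i) - ψ (g i) • (1 : Matrix (Fin 2) (Fin 2) K))) f) ∧
      t - (FreeAlgebra.lift T (fun i : Fin r => χ (g i) - ψ (g i))) f ∈ I := by
  classical
  set M : Fin r → Matrix (Fin 2) (Fin 2) K :=
    fun i => ρ (g i) - ψ (g i) • (1 : Matrix (Fin 2) (Fin 2) K) with hM
  set v : Fin r → T := fun i => χ (g i) - ψ (g i) with hv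
  -- the key trace expansion, by induction on words
  have key : ∀ (l : List (Fin r)) (h : G), ∃ t : T,
      algebraMap T K t = Matrix.trace (ρ h * (l.map M).prod) ∧
      t - (χ h * (l.map v).prod + (if l = [] then ψ h else 0)) ∈ I := by
    intro l
    induction l with
    | nil =>
      intro h
      obtain ⟨t, ht1, ht2⟩ := htr h
      refine ⟨t, by simpa using ht1, by simpa using ht2⟩
    | cons i l ih =>
      intro h
      obtain ⟨t1, ht11, ht12⟩ := ih (h * g i)
      obtain ⟨t2, ht21, ht22⟩ := ih h
      refine ⟨t1 - ψ (g i) * t2, ?_, ?_⟩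
      · rw [map_sub, map_mul, ht11, ht21, map_mul ρ]
        simp only [List.map_cons, List.prod_cons, hM]
        rw [sub_mul, mul_sub, Matrix.trace_sub, mul_assoc]
        congr 1
        rw [Matrix.smul_mul, Matrix.one_mul, Matrix.mul_smul, Matrix.trace_smul,
          Algebra.smul_def]
      · have hI : t1 - (χ (h * g i) * (l.map v).prod + (if l = [] then ψ (h * g i) else 0))
            - ψ (g i) * (t2 - (χ h * (l.map v).prod + (if l = [] then ψ h else 0))) ∈ I :=
          I.sub_mem ht12 (I.mul_mem_left _ ht22)
        have heq : t1 - (χ (h * g i) * (l.map v).prod + (if l = [] then ψ (h * g i) else 0))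
            - ψ (g i) * (t2 - (χ h * (l.map v).prod + (if l = [] then ψ h else 0)))
            = t1 - ψ (g i) * t2
              - (χ h * ((i :: l).map v).prod + (if (i :: l) = [] then ψ h else 0)) := by
          simp only [List.map_cons, List.prod_cons, map_mul, hv, reduceIte]
          by_cases hl : l = [] <;> simp [hl] <;> ring
        rwa [heq] at hI
  -- the submodule of pairs (matrix, scalar) with trace in `T` congruent to the scalar
  set P : Submodule T (Matrix (Fin 2) (Fin 2) K × T) :=
    { carrier := {p | ∃ t : T, algebraMap T K t = Matrix.trace p.1 ∧ t - p.2 ∈ I}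
      add_mem' := by
        rintro p q ⟨t1, ht1, ht1'⟩ ⟨t2, ht2, ht2'⟩
        refine ⟨t1 + t2, ?_, ?_⟩
        · have h1 : (p + q).1 = p.1 + q.1 := rfl
          rw [h1, Matrix.trace_add, map_add, ht1, ht2]
        · have h2 : (p + q).2 = p.2 + q.2 := rfl
          have h3 : t1 + t2 - (p.2 + q.2) = (t1 - p.2) + (t2 - q.2) := by ring
          rw [h2, h3]; exact I.add_mem ht1' ht2'
      zero_mem' := ⟨0, by simp, by simpa using I.zero_mem⟩
      smul_mem' := by
        rintro c p ⟨t, ht, ht'⟩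
        refine ⟨c * t, ?_, ?_⟩
        · have h1 : (c • p).1 = c • p.1 := rfl
          rw [h1, Matrix.trace_smul, Algebra.smul_def, map_mul, ht]
        · have h2 : (c • p).2 = c • p.2 := rfl
          have h3 : c * t - c • p.2 = c * (t - p.2) := by
            rw [smul_eq_mul]; ring
          rw [h2, h3]; exact I.mul_mem_left _ ht' } with hP
  -- nonempty monomials are in `P`
  have mono : ∀ l : List (Fin r), l ≠ [] → ((l.map M).prod, (l.map v).prod) ∈ P := by
    intro l hl
    obtain ⟨t, ht1, ht2⟩ := key l 1
    refine ⟨t, ?_, ?_⟩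
    · simpa using ht1
    · simpa [hl] using ht2
  -- the pair of evaluation maps, as a linear map from the monoid algebra
  set e := (FreeAlgebra.equivMonoidAlgebraFreeMonoid (R := T) (X := Fin r)) with he
  set L : MonoidAlgebra T (FreeMonoid (Fin r)) →ₗ[T] Matrix (Fin 2) (Fin 2) K × T :=
    (LinearMap.prod (FreeAlgebra.lift T M).toLinearMap
      (FreeAlgebra.lift T v).toLinearMap).comp e.symm.toLinearMap with hL
  set F := e f with hFdef
  have hfF : f = e.symm F := by rw [hFdef, AlgEquiv.symm_apply_apply]
  -- the constant coefficient of `f` vanishes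
  have hF1 : F.coeff 1 = 0 := by
    have : (FreeAlgebra.lift T (fun _ : Fin r => (0 : T))) (e.symm F) = F.coeff 1 := by
      conv_lhs => rw [← MonoidAlgebra.sum_coeff_single F]
      rw [map_finsuppSum, map_finsuppSum]
      rw [Finsupp.sum_eq_single (1 : FreeMonoid (Fin r))]
      · rw [stmt5_monomial_eval]
        simp
      · intro w hw hw1
        rw [stmt5_monomial_eval]
        have : w.toList ≠ [] := by
          intro hcon
          exact hw1 (FreeMonoid.toList.injective (by simpa using hcon))
        obtain ⟨a, l', hl'⟩ := List.exists_cons_of_ne_nil this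
        simp [hl']
      · intro _
        simp [MonoidAlgebra.single]
    rw [← hfF, hf] at this
    exact this.symm
  -- membership of the evaluated pair in `P`
  have hmem : L F ∈ P := by
    have hmain : L (Finsupp.sum F.coeff fun w c => MonoidAlgebra.single w c) ∈ P := by
      rw [map_finsuppSum]
      apply Submodule.sum_mem
      intro w hw
      show L (MonoidAlgebra.single w (F.coeff w)) ∈ P
      by_cases hw1 : w = 1
      · have : F.coeff w = 0 := by rw [hw1, hF1]
        rw [this]
        simpa using P.zero_mem
      · have hLw : L (MonoidAlgebra.single w (F.coeff w))
            = F.coeff w • ((w.toList.map M).prod, (w.toList.map v).prod) := by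
          rw [hL]
          simp only [LinearMap.comp_apply, AlgEquiv.toLinearMap_apply, LinearMap.prod_apply,
            Function.prod, AlgHom.toLinearMap_apply]
          rw [he, stmt5_monomial_eval, stmt5_monomial_eval, Prod.smul_mk]
        rw [hLw]
        apply P.smul_mem
        apply mono
        intro hcon
        exact hw1 (FreeMonoid.toList.injective (by simpa using hcon))
    rwa [MonoidAlgebra.sum_coeff_single] at hmain
  obtain ⟨t, ht1, ht2⟩ := hmem
  refine ⟨t, ?_, ?_⟩
  · convert ht1 using 2
    rw [hL]
    simp only [LinearMap.comp_apply, AlgEquiv.toLinearMap_apply, LinearMap.prod_apply,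
      Function.prod, AlgHom.toLinearMap_apply, ← hfF]
  · convert ht2 using 2
    rw [hL]
    simp only [LinearMap.comp_apply, AlgEquiv.toLinearMap_apply, LinearMap.prod_apply,
      Function.prod, AlgHom.toLinearMap_apply, ← hfF]
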